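/- Let h : E → ℝ be differentiable with ρ-Lipschitz gradient (ρ ≥ 0), let δ ∈ E satisfy ‖δ‖² ≤ B for some B ≥ 0, and let λ > Bρ. Then for every x ∈ E, the supremum over τ ∈ ℝ of h(x + τδ) − (λ/2)τ² is finite and satisfies the lower bound (1/(2(λ + Bρ))) ⟪δ, ∇h(x)⟫² ≤ (sup_{τ ∈ ℝ} [ h(x + τδ) − (λ/2)τ² ]) − h(x). (Proposition 1, lower bound.) -/

import Mathlib

open scoped RealInnerProductSpace

lemma taylor_two_sided
    {E : Type*} [NormedAddCommGroup E] [InnerProductSpace ℝ E] [CompleteSpace E]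
    (h : E → ℝ) (ρ : ℝ)
    (hdiff : ∀ x, DifferentiableAt ℝ h x)
    (hlip : ∀ x x' : E, ‖gradient h x - gradient h x'‖ ≤ ρ * ‖x - x'‖)
    (x d : E) :
    h x + ⟪gradient h x, d⟫ - ρ / 2 * ‖d‖ ^ 2 ≤ h (x + d) ∧
      h (x + d) ≤ h x + ⟪gradient h x, d⟫ + ρ / 2 * ‖d‖ ^ 2 := by
  set c : ℝ := ⟪gradient h x, d⟫ with hc
  have hφ : ∀ t : ℝ, HasDerivAt (fun t : ℝ => h (x + t • d))
      (⟪gradient h (x + t • d), d⟫) t := by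
    intro t
    have h1 : HasDerivAt (fun t : ℝ => x + t • d) d t := by
      simpa using ((hasDerivAt_id t).smul_const d).const_add x
    have h2 := (hdiff (x + t • d)).hasGradientAt.hasFDerivAt
    exact h2.comp_hasDerivAt t h1
  have key : ∀ s : ℝ, |s| ≤ 1 →
      s * (h x) ≤ s * (h (x + d) - c) + ρ / 2 * ‖d‖ ^ 2 := by
    intro s hs
    set g : ℝ → ℝ := fun t => s * (h (x + t • d) - t * c) + ρ / 2 * ‖d‖ ^ 2 * t ^ 2 with hg
    have hg' : ∀ t : ℝ, HasDerivAt g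
        (s * (⟪gradient h (x + t • d), d⟫ - c) + ρ * ‖d‖ ^ 2 * t) t := by
      intro t
      have := (((hφ t).sub (hasDerivAt_mul_const c)).const_mul s).add
        (((hasDerivAt_pow 2 t)).const_mul (ρ / 2 * ‖d‖ ^ 2))
      refine this.congr_deriv ?_
      norm_num
      ring
    have hmono : MonotoneOn g (Set.Icc (0:ℝ) 1) := by
      have hdg : DifferentiableOn ℝ g (Set.Icc 0 1) :=
        fun t _ => ((hg' t).differentiableAt).differentiableWithinAt
      apply monotoneOn_of_deriv_nonneg (convex_Icc 0 1) hdg.continuousOn (hdg.mono interior_subset)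
      · intro t ht
        rw [(hg' t).deriv]
        simp only [interior_Icc, Set.mem_Ioo] at ht
        have hinner : |⟪gradient h (x + t • d), d⟫ - c| ≤ ρ * ‖d‖ ^ 2 * t := by
          rw [hc, ← inner_sub_left]
          calc |⟪gradient h (x + t • d) - gradient h x, d⟫|
              ≤ ‖gradient h (x + t • d) - gradient h x‖ * ‖d‖ := abs_real_inner_le_norm _ _
            _ ≤ ρ * ‖x + t • d - x‖ * ‖d‖ := by
                have := hlip (x + t • d) x
                nlinarith [norm_nonneg d]
            _ = ρ * ‖d‖ ^ 2 * t := by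
                rw [add_sub_cancel_left, norm_smul, Real.norm_eq_abs,
                  abs_of_pos ht.1]
                ring
        have hbd : |s * (⟪gradient h (x + t • d), d⟫ - c)| ≤ ρ * ‖d‖ ^ 2 * t := by
          rw [abs_mul]
          calc |s| * |⟪gradient h (x + t • d), d⟫ - c| ≤ 1 * (ρ * ‖d‖ ^ 2 * t) := by
                apply mul_le_mul hs hinner (abs_nonneg _) zero_le_one
            _ = ρ * ‖d‖ ^ 2 * t := one_mul _
        have := (abs_le.mp hbd).1
        linarith
    have := hmono (Set.mem_Icc.mpr ⟨le_refl 0, zero_le_one⟩)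
      (Set.mem_Icc.mpr ⟨zero_le_one, le_refl 1⟩) zero_le_one
    simp only [hg, zero_smul, add_zero, one_smul, zero_mul, mul_zero, sub_zero,
      one_mul] at this
    nlinarith
  constructor
  · have := key 1 (by norm_num)
    linarith
  · have := key (-1) (by norm_num)
    linarith

theorem uad_pca_lower_bound
    {E : Type*} [NormedAddCommGroup E] [InnerProductSpace ℝ E] [CompleteSpace E]
    (h : E → ℝ) (ρ : ℝ) (hρ : 0 ≤ ρ)
    (hdiff : ∀ x, DifferentiableAt ℝ h x)
    (hlip : ∀ x x' : E, ‖gradient h x - gradient h x'‖ ≤ ρ * ‖x - x'‖)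
    (δ : E) (B : ℝ) (hB : 0 ≤ B) (hδ : ‖δ‖ ^ 2 ≤ B)
    (lam : ℝ) (hlam : B * ρ < lam)
    (x : E) :
    BddAbove (Set.range fun τ : ℝ => h (x + τ • δ) - lam / 2 * τ ^ 2) ∧
    (1 / (2 * (lam + B * ρ))) * ⟪δ, gradient h x⟫ ^ 2 ≤
      sSup (Set.range fun τ : ℝ => h (x + τ • δ) - lam / 2 * τ ^ 2) - h x := by
  set g : ℝ := ⟪δ, gradient h x⟫ with hgdef
  have hg' : ∀ τ : ℝ, ⟪gradient h x, τ • δ⟫ = τ * g := by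
    intro τ
    rw [real_inner_smul_right, real_inner_comm]
  have hρB : ρ * ‖δ‖ ^ 2 ≤ B * ρ := by nlinarith
  have hbdd : BddAbove (Set.range fun τ : ℝ => h (x + τ • δ) - lam / 2 * τ ^ 2) := by
    refine ⟨h x + g ^ 2 / (2 * (lam - B * ρ)), ?_⟩
    rintro _ ⟨τ, rfl⟩
    have ht := (taylor_two_sided h ρ hdiff hlip x (τ • δ)).2
    rw [hg' τ, norm_smul, Real.norm_eq_abs, mul_pow, sq_abs] at ht
    have hpos : 0 < lam - B * ρ := by linarith
    have hquad : τ * g - (lam - B * ρ) / 2 * τ ^ 2 ≤ g ^ 2 / (2 * (lam - B * ρ)) := by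
      rw [← sub_nonneg, div_sub' (by positivity)]
      apply div_nonneg _ (by positivity)
      nlinarith [sq_nonneg (g - (lam - B * ρ) * τ)]
    have : ρ / 2 * (τ ^ 2 * ‖δ‖ ^ 2) ≤ B * ρ / 2 * τ ^ 2 := by nlinarith [sq_nonneg τ]
    simp only [Set.mem_setOf_eq]
    linarith
  refine ⟨hbdd, ?_⟩
  have hpos : 0 < lam + B * ρ := by nlinarith
  set τ0 : ℝ := g / (lam + B * ρ) with hτ0
  have hmem : h (x + τ0 • δ) - lam / 2 * τ0 ^ 2 ∈
      Set.range fun τ : ℝ => h (x + τ • δ) - lam / 2 * τ ^ 2 := ⟨τ0, rfl⟩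
  have hle := le_csSup hbdd hmem
  have ht := (taylor_two_sided h ρ hdiff hlip x (τ0 • δ)).1
  rw [hg' τ0, norm_smul, Real.norm_eq_abs, mul_pow, sq_abs] at ht
  have h1 : ρ / 2 * (τ0 ^ 2 * ‖δ‖ ^ 2) ≤ B * ρ / 2 * τ0 ^ 2 := by nlinarith [sq_nonneg τ0]
  have h2 : τ0 * g - (lam + B * ρ) / 2 * τ0 ^ 2 = 1 / (2 * (lam + B * ρ)) * g ^ 2 := by
    rw [hτ0]
    field_simp
    ring
  linarith
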